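/- If ⟨E_M(N)⟩ = N, then each isolated component of a minimal primary decomposition of N is a prime submodule. That is, if N = Q_1 ∩ … ∩ Q_n is a minimal primary decomposition with Q_i p_i-primary and Q_k is a component whose prime p_k is minimal among p_1, …, p_n, then Q_k is prime (i.e. (Q_k : M) = p_k, so rm ∈ Q_k implies m ∈ Q_k or rM ⊆ Q_k). -/

import Mathlib

/-- If `⟨E_M(N)⟩ = N` and `N = Q₁ ∩ ⋯ ∩ Q_n` is a minimal primary
decomposition with `Qᵢ` `pᵢ`-primary, then every isolated component (one whose prime is
minimal among `p₁, …, p_n`) is a prime submodule. -/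
theorem isolated_component_prime_of_envelope_eq
    {R M : Type*} [CommRing R] [IsNoetherianRing R]
    [AddCommGroup M] [Module R M] [Module.Finite R M]
    (N : Submodule R M) (hN : N ≠ ⊤)
    (n : ℕ) (Q : Fin n → Submodule R M) (p : Fin n → Ideal R)
    -- each `Q i` is a primary submodule
    (hprimary : ∀ i, Q i ≠ ⊤ ∧ ∀ (r : R) (m : M), r • m ∈ Q i →
        m ∈ Q i ∨ ∃ t : ℕ, 0 < t ∧ ∀ x : M, r ^ t • x ∈ Q i)
    -- each `Q i` is `p i`-primary, i.e. `p i = √(Q i : M)`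
    (hrad : ∀ i, ((Q i).colon ⊤).radical = p i)
    (hprime : ∀ i, (p i).IsPrime)
    -- the decomposition
    (hdecomp : N = ⨅ i, Q i)
    -- minimality: the primes are pairwise distinct and no component is redundant
    (hdistinct : Function.Injective p)
    (hirr : ∀ j, ¬ (⨅ i, ⨅ _ : i ≠ j, Q i) ≤ Q j)
    -- the envelope of `N` generates `N`
    (henv : Submodule.span R {x : M | ∃ (r : R) (m : M) (t : ℕ),
        0 < t ∧ r ^ t • m ∈ N ∧ x = r • m} = N)
    -- `Q k` is an isolated component: `p k` is minimal among the `p i`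
    (k : Fin n) (hmin : ∀ i, p i ≤ p k → p i = p k) :
    (Q k).colon ⊤ = p k ∧
      ∀ (r : R) (m : M), r • m ∈ Q k → m ∈ Q k ∨ ∀ x : M, r • x ∈ Q k := by
  classical
  -- construct s ∉ p k with s • M ⊆ Q j for all j ≠ k
  have key : ∀ F : Finset (Fin n), k ∉ F →
      ∃ s : R, s ∉ p k ∧ ∀ j ∈ F, ∀ x : M, s • x ∈ Q j := by
    intro F
    induction F using Finset.induction_on with
    | empty =>
      intro _
      exact ⟨1, fun h => (hprime k).ne_top (Ideal.eq_top_of_isUnit_mem _ h isUnit_one),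
        by simp⟩
    | @insert j F hjF ih =>
      intro hk
      have hjk : j ≠ k := fun h => hk (h ▸ Finset.mem_insert_self j F)
      obtain ⟨s, hs, hsQ⟩ := ih (fun h => hk (Finset.mem_insert_of_mem h))
      have hnle : ¬ p j ≤ p k := fun h => hjk (hdistinct (hmin j h))
      obtain ⟨a, haj, hak⟩ := SetLike.not_le_iff_exists.mp hnle
      have ha : a ∈ ((Q j).colon ⊤).radical := (hrad j) ▸ haj
      obtain ⟨t, ht⟩ := Ideal.mem_radical_iff.mp ha
      refine ⟨a ^ t * s, ?_, ?_⟩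
      · intro h
        rcases (hprime k).mul_mem_iff_mem_or_mem.mp h with h | h
        · exact hak ((hprime k).mem_of_pow_mem t h)
        · exact hs h
      · intro j' hj' x
        rcases Finset.mem_insert.mp hj' with rfl | hj'
        · have := Submodule.mem_colon.mp ht (s • x) (Set.mem_univ _)
          rwa [mul_smul]
        · rw [mul_smul]
          exact Submodule.smul_mem _ _ (hsQ j' hj' x)
  obtain ⟨s, hs, hsQ⟩ := key (Finset.univ.erase k) (Finset.notMem_erase k _)
  have hsQ' : ∀ j, j ≠ k → ∀ x : M, s • x ∈ Q j := fun j hj x =>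
    hsQ j (Finset.mem_erase.mpr ⟨hj, Finset.mem_univ j⟩) x
  -- p k ≤ (Q k : M)
  have hpk_le : p k ≤ (Q k).colon ⊤ := by
    intro r hr
    rw [Submodule.mem_colon]
    intro x _
    have hr' : r ∈ ((Q k).colon ⊤).radical := (hrad k) ▸ hr
    obtain ⟨t, ht⟩ := Ideal.mem_radical_iff.mp hr'
    have h1 : r ^ (t + 1) • (s • x) ∈ N := by
      rw [hdecomp, Submodule.mem_iInf]
      intro j
      by_cases hj : j = k
      · subst hj
        rw [pow_succ', mul_smul]
        exact Submodule.smul_mem _ _ (Submodule.mem_colon.mp ht (s • x) (Set.mem_univ _))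
      · have := hsQ' j hj (r ^ (t + 1) • x)
        rwa [smul_comm] at this
    have h2 : r • (s • x) ∈ N := by
      rw [← henv]
      exact Submodule.subset_span ⟨r, s • x, t + 1, Nat.succ_pos t, h1, rfl⟩
    have h3 : s • (r • x) ∈ Q k := by
      rw [smul_comm]
      exact (le_of_eq hdecomp |>.trans (iInf_le Q k)) h2
    rcases (hprimary k).2 s (r • x) h3 with h | ⟨u, _, hu⟩
    · exact h
    · exfalso
      apply hs
      have hsu : s ^ u ∈ (Q k).colon ⊤ :=
        Submodule.mem_colon.mpr (fun y _ => hu y)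
      exact (hrad k) ▸ (Ideal.mem_radical_iff.mpr ⟨u, hsu⟩)
  have hcolon : (Q k).colon ⊤ = p k :=
    le_antisymm ((hrad k) ▸ Ideal.le_radical) hpk_le
  refine ⟨hcolon, ?_⟩
  intro r m hrm
  rcases (hprimary k).2 r m hrm with h | ⟨t, _, ht⟩
  · exact Or.inl h
  · right
    intro x
    have hrk : r ∈ p k := by
      rw [← hrad k]
      exact Ideal.mem_radical_iff.mpr ⟨t, Submodule.mem_colon.mpr fun y _ => ht y⟩
    exact Submodule.mem_colon.mp (hpk_le hrk) x (Set.mem_univ _)
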